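/- Let k and r be real numbers with 1 < r < k, set δ := k² + r − √((k²−1)(k²−r²)), x₁ := δ/(r+1) and x₂ := k²/x₁. Then the Möbius transformation φ(x) = (2kx − k(r+1)) / (((r+1)/k)x − 2r/k) satisfies φ(x₁) = x₁ and φ(x₂) = x₂, and moreover (r+1)/2 < x₁ < r < k < x₂. -/

import Mathlib

/-- Proof of Theorem 3.1: the Möbius transformation of `fg⁻¹`,
`φ(x) = (2kx - k(r+1)) / (((r+1)/k)x - 2r/k)`, fixes the two points
`x₁ = δ/(r+1)` and `x₂ = k²/x₁`, and `(r+1)/2 < x₁ < r < k < x₂`. -/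
theorem stmt5 (k r : ℝ) (hr : 1 < r) (hk : r < k) :
    let δ := k ^ 2 + r - Real.sqrt ((k ^ 2 - 1) * (k ^ 2 - r ^ 2))
    let x₁ := δ / (r + 1)
    let x₂ := k ^ 2 / x₁
    let φ : ℝ → ℝ := fun x => (2 * k * x - k * (r + 1)) / (((r + 1) / k) * x - 2 * r / k)
    φ x₁ = x₁ ∧ φ x₂ = x₂ ∧ (r + 1) / 2 < x₁ ∧ x₁ < r ∧ r < k ∧ k < x₂ := by
  intro δ x₁ x₂ φ
  have hφ : ∀ x, φ x = (2 * k * x - k * (r + 1)) / (((r + 1) / k) * x - 2 * r / k) :=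
    fun _ => rfl
  have hx2d : x₂ = k ^ 2 / x₁ := rfl
  have hx1d : x₁ = δ / (r + 1) := rfl
  have hδd : δ = k ^ 2 + r - Real.sqrt ((k ^ 2 - 1) * (k ^ 2 - r ^ 2)) := rfl
  clear_value δ x₁ x₂ φ
  subst hx2d hx1d hδd
  simp only [hφ]
  set s := Real.sqrt ((k ^ 2 - 1) * (k ^ 2 - r ^ 2)) with hs_def
  set x₁ := (k ^ 2 + r - s) / (r + 1) with hx1
  have hk1 : 1 < k := hr.trans hk
  have hk0 : 0 < k := by linarith
  have hkne : k ≠ 0 := ne_of_gt hk0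
  have hr1 : (0:ℝ) < r + 1 := by linarith
  have hA : 0 < k ^ 2 - 1 := by nlinarith
  have hB : 0 < k ^ 2 - r ^ 2 := by nlinarith
  have hs2 : s ^ 2 = (k ^ 2 - 1) * (k ^ 2 - r ^ 2) := Real.sq_sqrt (by positivity)
  have hs0 : 0 < s := Real.sqrt_pos.mpr (by positivity)
  clear_value s x₁
  have hsB : k ^ 2 - r ^ 2 < s := by
    have h1 : (k ^ 2 - r ^ 2) ^ 2 < s ^ 2 := by
      nlinarith [mul_pos hB (show (0:ℝ) < r ^ 2 - 1 by nlinarith)]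
    nlinarith [h1, hs0, hB]
  have hsAB : 2 * s < (k ^ 2 - 1) + (k ^ 2 - r ^ 2) := by
    nlinarith [sq_nonneg ((k ^ 2 - 1) - (k ^ 2 - r ^ 2))]
  have hsK : s < k ^ 2 - r := by nlinarith [sq_nonneg (k * (r - 1))]
  -- inequalities
  have hx1lb : (r + 1) / 2 < x₁ := by
    rw [hx1, div_lt_div_iff₀ (by norm_num) hr1]; nlinarith
  have hx1r : x₁ < r := by
    rw [hx1, div_lt_iff₀ hr1]; nlinarith
  have hx10 : 0 < x₁ := by nlinarith
  have hx1k : x₁ < k := by linarith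
  have hx2k : k < k ^ 2 / x₁ := by
    rw [lt_div_iff₀ hx10]; nlinarith
  have hx1ne : x₁ ≠ 0 := ne_of_gt hx10
  -- quadratic equation satisfied by x₁ (and hence by x₂ = k²/x₁)
  have hquad : (r + 1) * x₁ ^ 2 - 2 * (k ^ 2 + r) * x₁ + k ^ 2 * (r + 1) = 0 := by
    rw [hx1]
    field_simp
    ring_nf
    nlinarith [hs2]
  have hquad2 : (r + 1) * (k ^ 2 / x₁) ^ 2 - 2 * (k ^ 2 + r) * (k ^ 2 / x₁)
      + k ^ 2 * (r + 1) = 0 := by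
    field_simp
    linear_combination k ^ 2 * hquad
  -- denominators positive
  have hd1 : 0 < ((r + 1) / k) * x₁ - 2 * r / k := by
    have h : ((r + 1) / k) * x₁ - 2 * r / k = ((r + 1) * x₁ - 2 * r) / k := by ring
    rw [h]
    apply div_pos _ hk0
    have h1 : (r + 1) * x₁ = k ^ 2 + r - s := by
      rw [hx1]; field_simp
    linarith [h1, hsK]
  have hd2 : 0 < ((r + 1) / k) * (k ^ 2 / x₁) - 2 * r / k := by
    have h : ((r + 1) / k) * (k ^ 2 / x₁) - 2 * r / k
        = ((r + 1) * (k ^ 2 / x₁) - 2 * r) / k := by ring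
    rw [h]
    apply div_pos _ hk0
    have h2 : 0 < (r + 1) * (k ^ 2 / x₁ - k) := mul_pos hr1 (sub_pos.mpr hx2k)
    have h3 : 0 < r * (k - 1) :=
      mul_pos (show (0:ℝ) < r by linarith) (show (0:ℝ) < k - 1 by linarith)
    have h4 : (r + 1) * (k ^ 2 / x₁) - 2 * r
        = (r + 1) * (k ^ 2 / x₁ - k) + r * (k - 1) + (k - r) := by ring
    rw [h4]
    linarith [h2, h3, hk]
  have key : ∀ x : ℝ, (r + 1) * x ^ 2 - 2 * (k ^ 2 + r) * x + k ^ 2 * (r + 1) = 0 →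
      0 < ((r + 1) / k) * x - 2 * r / k →
      (2 * k * x - k * (r + 1)) / (((r + 1) / k) * x - 2 * r / k) = x := by
    intro x hq hd
    rw [div_eq_iff (ne_of_gt hd)]
    field_simp
    linear_combination -hq
  exact ⟨key x₁ hquad hd1, key (k ^ 2 / x₁) hquad2 hd2, hx1lb, hx1r, hk, hx2k⟩
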